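/- Let d ≥ 1 be an integer and let 0 < α < 1/2. For each natural number s, let F(d,s) denote the number of monotone lattice paths from (0,0) to (s+2, s) using unit right and unit up steps such that no point of the path other than the final endpoint lies on the line y = x − 2 or on the line y = x + d. Then Σ'_{s=0}^{∞} F(d,s)·(α(1−α))^s = (1/α²)·(1 − (1−2α)/((1−α)²·(1 − (α/(1−α))^{d+2}))). -/

import Mathlib

/-- Number of right steps among the first `k` steps of a step sequence
(`true` = unit right step, `false` = unit up step). -/
def rightsBefore {n : ℕ} (f : Fin n → Bool) (k : ℕ) : ℕ :=
  (Finset.univ.filter fun j : Fin n => j.val < k ∧ f j = true).card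

/-- Number of up steps among the first `k` steps of a step sequence. -/
def upsBefore {n : ℕ} (f : Fin n → Bool) (k : ℕ) : ℕ :=
  (Finset.univ.filter fun j : Fin n => j.val < k ∧ f j = false).card

/-- `F d s`: the number of monotone lattice paths from `(0,0)` to `(s+2, s)`
using unit right and unit up steps such that no point of the path other than
the final endpoint lies on the line `y = x − 2` or on the line `y = x + d`. -/
noncomputable def latticeF (d s : ℕ) : ℕ :=
  Nat.card {f : Fin (2 * s + 2) → Bool //
    rightsBefore f (2 * s + 2) = s + 2 ∧
    ∀ k < 2 * s + 2,
      upsBefore f k ≠ rightsBefore f k + d ∧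
      rightsBefore f k ≠ upsBefore f k + 2}

lemma rightsBefore_zero {n : ℕ} (f : Fin n → Bool) : rightsBefore f 0 = 0 := by
  simp [rightsBefore]

lemma upsBefore_zero {n : ℕ} (f : Fin n → Bool) : upsBefore f 0 = 0 := by
  simp [upsBefore]


lemma card_filter_eq_sum {γ : Type*} [Fintype γ] (p : γ → Prop) [DecidablePred p] :
    (Finset.univ.filter p).card = ∑ j, if p j then 1 else 0 := by
  rw [Finset.card_eq_sum_ones, Finset.sum_filter]

lemma rightsBefore_cons {n : ℕ} (b : Bool) (g : Fin n → Bool) (k : ℕ) :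
    rightsBefore (Fin.cons b g) (k+1) = (if b = true then 1 else 0) + rightsBefore g k := by
  classical
  rw [rightsBefore, card_filter_eq_sum, rightsBefore, card_filter_eq_sum]
  rw [Fin.sum_univ_succ]
  simp [Fin.cons_succ, Fin.cons_zero, Nat.succ_lt_succ_iff]

lemma upsBefore_cons {n : ℕ} (b : Bool) (g : Fin n → Bool) (k : ℕ) :
    upsBefore (Fin.cons b g) (k+1) = (if b = false then 1 else 0) + upsBefore g k := by
  classical
  rw [upsBefore, card_filter_eq_sum, upsBefore, card_filter_eq_sum]
  rw [Fin.sum_univ_succ]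
  simp [Fin.cons_succ, Fin.cons_zero, Nat.succ_lt_succ_iff]

lemma rightsBefore_add_upsBefore {n : ℕ} (f : Fin n → Bool) :
    rightsBefore f n + upsBefore f n = n := by
  classical
  have h1 : ∀ j : Fin n, (j.val < n ∧ f j = true) ↔ (f j = true) := by
    intro j; simp [j.isLt]
  have h2 : ∀ j : Fin n, (j.val < n ∧ f j = false) ↔ ¬ (f j = true) := by
    intro j; simp [j.isLt]
  rw [rightsBefore, upsBefore, Finset.filter_congr (fun j _ => h1 j),
    Finset.filter_congr (fun j _ => h2 j),
    Finset.card_filter_add_card_filter_not, Finset.card_univ, Fintype.card_fin]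

def latC (d : ℕ) : ℕ → ℤ → ℕ
  | 0, p => if p = 2 then 1 else 0
  | n+1, p => if p ≠ 2 ∧ p ≠ -(d:ℤ) then latC d n (p+1) + latC d n (p-1) else 0

noncomputable def latQ (d : ℕ) (α : ℝ) : ℕ → ℤ → ℝ
  | 0, p => if p = 2 then 1 else 0
  | n+1, p => if p ≠ 2 ∧ p ≠ -(d:ℤ) then
      α * latQ d α n (p+1) + (1-α) * latQ d α n (p-1) else 0

lemma latQ_nonneg {d : ℕ} {α : ℝ} (h0 : 0 ≤ α) (h1 : α ≤ 1) :
    ∀ (n : ℕ) (p : ℤ), 0 ≤ latQ d α n p := by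
  intro n
  induction n with
  | zero => intro p; rw [latQ]; positivity
  | succ n ih =>
    intro p
    rw [latQ]
    split
    · have := ih (p+1); have := ih (p-1); nlinarith
    · exact le_refl 0

lemma latQ_sum_le {d : ℕ} {α : ℝ} (h0 : 0 ≤ α) (h1 : α ≤ 1) :
    ∀ (N : ℕ) (p : ℤ), ∑ n ∈ Finset.range N, latQ d α n p ≤ 1 := by
  intro N
  induction N with
  | zero => intro p; simp
  | succ N ih =>
    intro p
    rw [Finset.sum_range_succ']
    by_cases hg : p ≠ 2 ∧ p ≠ -(d:ℤ)
    · have he : ∀ n, latQ d α (n+1) p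
          = α * latQ d α n (p+1) + (1-α) * latQ d α n (p-1) := by
        intro n; rw [latQ, if_pos hg]
      simp only [he]
      rw [Finset.sum_add_distrib, ← Finset.mul_sum, ← Finset.mul_sum]
      have h2 : latQ d α 0 p = 0 := by rw [latQ, if_neg hg.1]
      rw [h2]
      have := ih (p+1); have := ih (p-1)
      have n1 : 0 ≤ ∑ n ∈ Finset.range N, latQ d α n (p+1) :=
        Finset.sum_nonneg fun i _ => latQ_nonneg h0 h1 i _
      have n2 : 0 ≤ ∑ n ∈ Finset.range N, latQ d α n (p-1) :=
        Finset.sum_nonneg fun i _ => latQ_nonneg h0 h1 i _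
      nlinarith
    · have he : ∀ n, latQ d α (n+1) p = 0 := by
        intro n; rw [latQ, if_neg hg]
      simp only [he]
      rw [latQ]
      split <;> simp

lemma latQ_summable {d : ℕ} {α : ℝ} (h0 : 0 ≤ α) (h1 : α ≤ 1) (p : ℤ) :
    Summable (fun n => latQ d α n p) :=
  summable_of_sum_range_le (fun n => latQ_nonneg h0 h1 n p)
    (fun N => latQ_sum_le h0 h1 N p)

lemma lat_zero {d : ℕ} {α : ℝ} :
    ∀ (n : ℕ) (p : ℤ), (∀ a b : ℕ, a + b = n → (a:ℤ) - b ≠ 2 - p) →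
      latC d n p = 0 ∧ latQ d α n p = 0 := by
  intro n
  induction n with
  | zero =>
    intro p h
    have hp : p ≠ 2 := by
      intro hp; exact h 0 0 rfl (by rw [hp]; ring)
    rw [latC, latQ]
    simp [hp]
  | succ n ih =>
    intro p h
    by_cases hg : p ≠ 2 ∧ p ≠ -(d:ℤ)
    · have h1 : ∀ a b : ℕ, a + b = n → (a:ℤ) - b ≠ 2 - (p+1) := by
        intro a b hab hne
        exact h (a+1) b (by omega) (by push_cast at hne ⊢; linarith)
      have h2 : ∀ a b : ℕ, a + b = n → (a:ℤ) - b ≠ 2 - (p-1) := by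
        intro a b hab hne
        exact h a (b+1) (by omega) (by push_cast at hne ⊢; linarith)
      obtain ⟨c1, q1⟩ := ih (p+1) h1
      obtain ⟨c2, q2⟩ := ih (p-1) h2
      rw [latC, latQ, if_pos hg, if_pos hg, c1, c2, q1, q2]
      norm_num
    · rw [latC, latQ, if_neg hg, if_neg hg]; exact ⟨rfl, rfl⟩

lemma latQ_eq_latC {d : ℕ} {α : ℝ} :
    ∀ (n : ℕ) (p : ℤ) (a b : ℕ), a + b = n → (a:ℤ) - b = 2 - p →
      latQ d α n p = latC d n p * α^a * (1-α)^b := by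
  intro n
  induction n with
  | zero =>
    intro p a b hab h2
    have ha : a = 0 := by omega
    have hb : b = 0 := by omega
    have hp : p = 2 := by subst ha; subst hb; push_cast at h2; linarith
    subst ha; subst hb; subst hp
    rw [latQ, latC]; norm_num
  | succ n ih =>
    intro p a b hab h2
    by_cases hg : p ≠ 2 ∧ p ≠ -(d:ℤ)
    · rw [latQ, latC, if_pos hg, if_pos hg]
      rcases Nat.eq_zero_or_pos b with hb | hb
      · subst hb
        have ha : a = n + 1 := by omega
        have hQ1 : latQ d α n (p+1) = latC d n (p+1) * α^(a-1) * (1-α)^0 :=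
          ih (p+1) (a-1) 0 (by omega) (by push_cast at h2 ⊢; push_cast [ha] at h2 ⊢ <;> omega)
        have hz : latC d n (p-1) = 0 ∧ latQ d α n (p-1) = 0 := by
          apply lat_zero
          intro a' b' hab' hne
          push_cast at h2 hne
          omega
        rw [hQ1, hz.1, hz.2]
        have : a = (a - 1) + 1 := by omega
        rw [this]
        push_cast
        ring
      · rcases Nat.eq_zero_or_pos a with ha | ha
        · subst ha
          have hQ2 : latQ d α n (p-1) = latC d n (p-1) * α^0 * (1-α)^(b-1) :=
            ih (p-1) 0 (b-1) (by omega) (by push_cast at h2 ⊢; omega)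
          have hz : latC d n (p+1) = 0 ∧ latQ d α n (p+1) = 0 := by
            apply lat_zero
            intro a' b' hab' hne
            push_cast at h2 hne
            omega
          rw [hQ2, hz.1, hz.2]
          have : b = (b - 1) + 1 := by omega
          rw [this]
          push_cast
          ring
        · have hQ1 : latQ d α n (p+1) = latC d n (p+1) * α^(a-1) * (1-α)^b :=
            ih (p+1) (a-1) b (by omega) (by push_cast at h2 ⊢; omega)
          have hQ2 : latQ d α n (p-1) = latC d n (p-1) * α^a * (1-α)^(b-1) :=
            ih (p-1) a (b-1) (by omega) (by push_cast at h2 ⊢; omega)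
          rw [hQ1, hQ2]
          have pa : α ^ a = α * α ^ (a-1) := by
            conv_lhs => rw [show a = (a-1)+1 by omega]
            rw [pow_succ']
          have pb : (1-α) ^ b = (1-α) * (1-α) ^ (b-1) := by
            conv_lhs => rw [show b = (b-1)+1 by omega]
            rw [pow_succ']
          rw [pa, pb]
          push_cast
          ring
    · have hz : latC d (n+1) p = 0 := by rw [latC, if_neg hg]
      have hzq : latQ d α (n+1) p = 0 := by rw [latQ, if_neg hg]
      rw [hz, hzq]
      norm_num

def goodPath (d : ℕ) (p : ℤ) (n : ℕ) (f : Fin n → Bool) : Prop :=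
  p + (rightsBefore f n : ℤ) - upsBefore f n = 2 ∧
  ∀ k < n, p + (rightsBefore f k : ℤ) - upsBefore f k ≠ 2 ∧
    p + (rightsBefore f k : ℤ) - upsBefore f k ≠ -(d:ℤ)

lemma card_prod_bool {γ : Type*} [Finite γ] (Q : Bool → γ → Prop) :
    Nat.card {x : Bool × γ // Q x.1 x.2} =
      Nat.card {g // Q true g} + Nat.card {g // Q false g} := by
  have e : {x : Bool × γ // Q x.1 x.2} ≃ {g // Q true g} ⊕ {g // Q false g} :=
    { toFun := fun x => match x with
        | ⟨(true, g), h⟩ => .inl ⟨g, h⟩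
        | ⟨(false, g), h⟩ => .inr ⟨g, h⟩
      invFun := fun x => match x with
        | .inl ⟨g, h⟩ => ⟨(true, g), h⟩
        | .inr ⟨g, h⟩ => ⟨(false, g), h⟩
      left_inv := by rintro ⟨⟨(_|_), g⟩, h⟩ <;> rfl
      right_inv := by rintro (⟨g,h⟩|⟨g,h⟩) <;> rfl }
  rw [Nat.card_congr e, Nat.card_sum]

lemma goodPath_cons_iff {d : ℕ} {p : ℤ} {n : ℕ} (b : Bool) (g : Fin n → Bool) :
    goodPath d p (n+1) (Fin.cons b g) ↔
      (p ≠ 2 ∧ p ≠ -(d:ℤ)) ∧ goodPath d (p + if b = true then 1 else -1) n g := by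
  have key : ∀ k : ℕ, p + (rightsBefore (Fin.cons b g) (k+1) : ℤ)
      - upsBefore (Fin.cons b g) (k+1)
      = (p + if b = true then 1 else -1) + (rightsBefore g k : ℤ) - upsBefore g k := by
    intro k
    rw [rightsBefore_cons, upsBefore_cons]
    cases b <;> simp <;> push_cast <;> ring
  constructor
  · rintro ⟨hend, hmid⟩
    have h0 := hmid 0 (Nat.succ_pos n)
    rw [rightsBefore_zero, upsBefore_zero] at h0
    push_cast at h0
    refine ⟨by simpa using h0, ?_, ?_⟩
    · rw [← key n]; exact hend
    · intro k hk
      have := hmid (k+1) (by omega)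
      rwa [key k] at this
  · rintro ⟨hg, hend, hmid⟩
    constructor
    · rw [key n]; exact hend
    · intro k hk
      cases k with
      | zero =>
        rw [rightsBefore_zero, upsBefore_zero]
        push_cast
        simpa using hg
      | succ k =>
        rw [key k]
        exact hmid k (by omega)

lemma card_goodPath {d : ℕ} :
    ∀ (n : ℕ) (p : ℤ), Nat.card {f : Fin n → Bool // goodPath d p n f} = latC d n p := by
  intro n
  induction n with
  | zero =>
    intro p
    by_cases hp : p = 2
    · have : ∀ f : Fin 0 → Bool, goodPath d p 0 f := by
        intro f
        refine ⟨?_, by omega⟩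
        rw [rightsBefore_zero, upsBefore_zero, hp]
        simp
      rw [latC, if_pos hp]
      rw [Nat.card_eq_one_iff_unique.mpr]
      constructor
      · constructor
        intro a b
        ext i
        exact absurd i.2 (by omega)
      · exact ⟨⟨fun i => absurd i.2 (by omega), this _⟩⟩
    · have : IsEmpty {f : Fin 0 → Bool // goodPath d p 0 f} := by
        constructor
        rintro ⟨f, hend, -⟩
        rw [rightsBefore_zero, upsBefore_zero] at hend
        push_cast at hend
        omega
      rw [latC, if_neg hp, Nat.card_of_isEmpty]
  | succ n ih =>
    intro p
    by_cases hg : p ≠ 2 ∧ p ≠ -(d:ℤ)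
    · have e1 : {f : Fin (n+1) → Bool // goodPath d p (n+1) f}
          ≃ {x : Bool × (Fin n → Bool) // goodPath d p (n+1) (Fin.cons x.1 x.2)} := by
        apply Equiv.subtypeEquiv (Fin.consEquiv (fun _ => Bool)).symm
        intro f
        simp [Fin.consEquiv]
      rw [Nat.card_congr e1]
      have e2 : ∀ (b : Bool) (g : Fin n → Bool), goodPath d p (n+1) (Fin.cons b g)
          ↔ goodPath d (p + if b = true then 1 else -1) n g := by
        intro b g
        rw [goodPath_cons_iff]
        simp [hg]
      rw [card_prod_bool (fun b g => goodPath d p (n+1) (Fin.cons b g))]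
      have r1 : Nat.card {g : Fin n → Bool // goodPath d p (n+1) (Fin.cons true g)}
          = latC d n (p+1) := by
        rw [← ih (p+1)]
        apply Nat.card_congr
        apply Equiv.subtypeEquivRight
        intro g
        rw [e2 true g]
        norm_num
      have r2 : Nat.card {g : Fin n → Bool // goodPath d p (n+1) (Fin.cons false g)}
          = latC d n (p-1) := by
        rw [← ih (p-1)]
        apply Nat.card_congr
        apply Equiv.subtypeEquivRight
        intro g
        rw [e2 false g]
        norm_num [sub_eq_add_neg]
      rw [r1, r2, latC, if_pos hg]
    · have : IsEmpty {f : Fin (n+1) → Bool // goodPath d p (n+1) f} := by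
        constructor
        rintro ⟨f, -, hmid⟩
        have h0 := hmid 0 (Nat.succ_pos n)
        rw [rightsBefore_zero, upsBefore_zero] at h0
        push_cast at h0
        simp at h0
        exact hg h0
      rw [latC, if_neg hg, Nat.card_of_isEmpty]

lemma latticeF_eq_latC (d s : ℕ) : latticeF d s = latC d (2*s+2) 0 := by
  rw [← card_goodPath (2*s+2) 0, latticeF]
  apply Nat.card_congr
  apply Equiv.subtypeEquivRight
  intro f
  have htot := rightsBefore_add_upsBefore f
  constructor
  · rintro ⟨hend, hmid⟩
    constructor
    · have hu : upsBefore f (2*s+2) = s := by omega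
      rw [hend, hu]; push_cast; ring
    · intro k hk
      obtain ⟨h1, h2⟩ := hmid k hk
      constructor
      · intro hc; apply h2; omega
      · intro hc; apply h1; omega
  · rintro ⟨hend, hmid⟩
    constructor
    · have : (rightsBefore f (2*s+2) : ℤ) - upsBefore f (2*s+2) = 2 := by
        rw [← hend]; ring
      omega
    · intro k hk
      obtain ⟨h1, h2⟩ := hmid k hk
      constructor
      · intro hc; apply h2; omega
      · intro hc; apply h1; omega

section main

variable {d : ℕ} {α : ℝ}

noncomputable def latP (d : ℕ) (α : ℝ) (p : ℤ) : ℝ := ∑' n, latQ d α n p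

lemma latP_rec (h0 : 0 ≤ α) (h1 : α ≤ 1) (p : ℤ) :
    latP d α p = (if p = 2 then 1 else 0) +
      (if p ≠ 2 ∧ p ≠ -(d:ℤ) then
        α * latP d α (p+1) + (1-α) * latP d α (p-1) else 0) := by
  rw [latP, Summable.tsum_eq_zero_add (latQ_summable h0 h1 p)]
  have h00 : latQ d α 0 p = (if p = 2 then 1 else 0) := by rw [latQ]
  rw [h00]
  congr 1
  by_cases hg : p ≠ 2 ∧ p ≠ -(d:ℤ)
  · rw [if_pos hg]
    have he : ∀ n, latQ d α (n+1) p
        = α * latQ d α n (p+1) + (1-α) * latQ d α n (p-1) :=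
      fun n => by rw [latQ, if_pos hg]
    simp only [he]
    rw [Summable.tsum_add ((latQ_summable h0 h1 (p+1)).mul_left α)
      ((latQ_summable h0 h1 (p-1)).mul_left (1-α)), tsum_mul_left, tsum_mul_left]
    rfl
  · rw [if_neg hg]
    have he : ∀ n, latQ d α (n+1) p = 0 := fun n => by rw [latQ, if_neg hg]
    simp only [he, tsum_zero]

lemma latP_two (h0 : 0 ≤ α) (h1 : α ≤ 1) : latP d α 2 = 1 := by
  rw [latP_rec h0 h1]
  norm_num

lemma latP_bot (h0 : 0 ≤ α) (h1 : α ≤ 1) : latP d α (-(d:ℤ)) = 0 := by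
  rw [latP_rec h0 h1]
  have hne : -(d:ℤ) ≠ 2 := by omega
  simp [hne]

lemma latP_mid (h0 : 0 ≤ α) (h1 : α ≤ 1) (p : ℤ) (hb : -(d:ℤ) < p) (ht : p < 2) :
    latP d α p = α * latP d α (p+1) + (1-α) * latP d α (p-1) := by
  rw [latP_rec h0 h1]
  have h2 : p ≠ 2 := by omega
  have h3 : p ≠ -(d:ℤ) := by omega
  simp [h2, h3]

end main

lemma latP_formula (hd : 1 ≤ d) (hα0 : 0 < α) (hα1 : α < 1/2) :
    ∀ j : ℕ, j ≤ d + 2 →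
      latP d α (-(d:ℤ) + j) * (((1-α)/α) - 1)
        = latP d α (-(d:ℤ) + 1) * (((1-α)/α)^j - 1) := by
  have h0 : (0:ℝ) ≤ α := le_of_lt hα0
  have h1 : α ≤ 1 := by linarith
  set ρ : ℝ := (1-α)/α with hρdef
  have hρ : α * ρ = 1 - α := by
    rw [hρdef]; field_simp
  clear_value ρ
  clear hρdef
  intro j
  induction j using Nat.twoStepInduction with
  | zero =>
    intro _
    have hb : latP d α (-(d:ℤ) + ((0:ℕ):ℤ)) = 0 := by
      rw [show -(d:ℤ) + ((0:ℕ):ℤ) = -(d:ℤ) by push_cast; ring]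
      exact latP_bot h0 h1
    rw [hb, pow_zero]
    ring
  | one =>
    intro _
    rw [show -(d:ℤ) + ((1:ℕ):ℤ) = -(d:ℤ) + 1 by push_cast; ring, pow_one]
  | more j ihj ihj1 =>
    intro hj
    have hj1 : j + 1 ≤ d + 2 := by omega
    have hj0 : j ≤ d + 2 := by omega
    have Aj := ihj hj0
    have Aj1 := ihj1 hj1
    have hmid := latP_mid (d := d) h0 h1 (-(d:ℤ) + (j+1 : ℕ))
      (by push_cast; omega) (by push_cast; omega)
    have e1 : -(d:ℤ) + ((j:ℕ)+1 : ℕ) + 1 = -(d:ℤ) + ((j+2 : ℕ) : ℤ) := by push_cast; ring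
    have e2 : -(d:ℤ) + ((j:ℕ)+1 : ℕ) - 1 = -(d:ℤ) + ((j : ℕ) : ℤ) := by push_cast; ring
    rw [e1, e2] at hmid
    have key : α * (latP d α (-(d:ℤ) + ((j+2:ℕ):ℤ)) * (ρ - 1))
        = α * (latP d α (-(d:ℤ) + 1) * (ρ^(j+2) - 1)) := by
      have expand : α * (latP d α (-(d:ℤ) + ((j+2:ℕ):ℤ)) * (ρ - 1))
          = latP d α (-(d:ℤ) + ((j+1:ℕ):ℤ)) * (ρ - 1)
            - (1-α) * (latP d α (-(d:ℤ) + ((j:ℕ):ℤ)) * (ρ - 1)) := by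
        rw [hmid]; ring
      rw [expand, Aj1, Aj]
      linear_combination (-(latP d α (-(d:ℤ) + 1)) * (ρ^(j+1) - ρ^j)) * hρ
    have hα0' : α ≠ 0 := ne_of_gt hα0
    exact mul_left_cancel₀ hα0' key

lemma latP_zero_val (hd : 1 ≤ d) (hα0 : 0 < α) (hα1 : α < 1/2) :
    latP d α 0 * (((1-α)/α)^(d+2) - 1) = ((1-α)/α)^d - 1 := by
  set ρ : ℝ := (1-α)/α with hρdef
  have hρ1 : 1 < ρ := by
    rw [hρdef, lt_div_iff₀ hα0]
    linarith
  have h0 : (0:ℝ) ≤ α := le_of_lt hα0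
  have h1 : α ≤ 1 := by linarith
  have hd2 := latP_formula hd hα0 hα1 (d+2) le_rfl
  have hdd := latP_formula hd hα0 hα1 d (by omega)
  rw [show -(d:ℤ) + ((d:ℕ):ℤ) = 0 by ring] at hdd
  rw [show -(d:ℤ) + ((d+2:ℕ):ℤ) = 2 by push_cast; ring, latP_two h0 h1] at hd2
  have hρne : ρ - 1 ≠ 0 := by linarith
  apply mul_left_cancel₀ hρne
  calc (ρ - 1) * (latP d α 0 * (ρ^(d+2) - 1))
      = (latP d α 0 * (ρ - 1)) * (ρ^(d+2) - 1) := by ring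
    _ = (latP d α (-(d:ℤ)+1) * (ρ^d - 1)) * (ρ^(d+2) - 1) := by rw [hdd]
    _ = (latP d α (-(d:ℤ)+1) * (ρ^(d+2) - 1)) * (ρ^d - 1) := by ring
    _ = (1 * (ρ - 1)) * (ρ^d - 1) := by rw [← hd2]
    _ = (ρ - 1) * (ρ^d - 1) := by ring

/-- Lemma 5. -/
theorem stmt_18 (d : ℕ) (hd : 1 ≤ d) (α : ℝ) (hα0 : 0 < α) (hα1 : α < 1 / 2) :
    ∑' s : ℕ, (latticeF d s : ℝ) * (α * (1 - α)) ^ s =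
      (1 / α ^ 2) *
        (1 - (1 - 2 * α) /
          ((1 - α) ^ 2 * (1 - (α / (1 - α)) ^ (d + 2)))) := by
  have h0 : (0:ℝ) ≤ α := le_of_lt hα0
  have h1 : α ≤ 1 := by linarith
  have hαne : α ≠ 0 := ne_of_gt hα0
  have h1α : (0:ℝ) < 1 - α := by linarith
  have h1αne : (1:ℝ) - α ≠ 0 := ne_of_gt h1α
  set ρ : ℝ := (1-α)/α with hρdef
  have hρ1 : 1 < ρ := by rw [hρdef, lt_div_iff₀ hα0]; linarith
  have hρd2 : ρ^(d+2) - 1 ≠ 0 := by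
    have : 1 < ρ^(d+2) := one_lt_pow₀ hρ1 (by omega)
    linarith
  -- reindexing
  have hinj : Function.Injective (fun s : ℕ => 2*s+2) := by
    intro a b h
    simp only at h
    omega
  have hsupp : Function.support (fun n => latQ d α n 0) ⊆
      Set.range (fun s : ℕ => 2*s+2) := by
    intro n hn
    by_contra hr
    apply hn
    refine (lat_zero n 0 ?_).2
    intro a b hab h2
    norm_num at h2
    apply hr
    exact ⟨b, show 2*b+2 = n by omega⟩
  have hre : ∑' s : ℕ, latQ d α (2*s+2) 0 = ∑' n, latQ d α n 0 :=
    hinj.tsum_eq hsupp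
  have hterm : ∀ s : ℕ, latQ d α (2*s+2) 0
      = α^2 * ((latticeF d s : ℝ) * (α * (1 - α)) ^ s) := by
    intro s
    rw [latQ_eq_latC (2*s+2) 0 (s+2) s (by omega) (by push_cast; ring),
      ← latticeF_eq_latC, mul_pow]
    ring
  have hsum : latP d α 0 = α^2 * ∑' s : ℕ, (latticeF d s : ℝ) * (α * (1 - α)) ^ s := by
    rw [latP, ← hre]
    simp only [hterm]
    rw [tsum_mul_left]
  have key := latP_zero_val hd hα0 hα1
  rw [← hρdef, hsum] at key
  -- key : α^2 * S * (ρ^(d+2) - 1) = ρ^d - 1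
  set S := ∑' s : ℕ, (latticeF d s : ℝ) * (α * (1 - α)) ^ s with hS
  have hSval : S = (ρ^d - 1) / (α^2 * (ρ^(d+2) - 1)) := by
    rw [eq_div_iff (by positivity <;> exact hρd2)]
    · linear_combination key
  rw [hSval, hρdef, div_pow, div_pow]
  have hA : α^(d+2) < (1-α)^(d+2) :=
    pow_lt_pow_left₀ (by linarith) h0 (by omega)
  have hAne : (1-α)^(d+2) - α^(d+2) ≠ 0 := by linarith
  have hden1 : ((1-α)/α)^(d+2) - 1 ≠ 0 := by
    rw [div_pow]
    field_simp
    intro h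
    exact hAne ((div_eq_zero_iff.mp h).resolve_right (pow_ne_zero _ hαne))
  have hden2 : 1 - α^(d+2)/(1-α)^(d+2) ≠ 0 := by
    field_simp
    exact fun h => hAne ((div_eq_zero_iff.mp h).resolve_right (pow_ne_zero _ h1αne))
  rw [div_sub_one (pow_ne_zero _ hαne), div_sub_one (pow_ne_zero _ hαne), div_pow,
    one_sub_div (pow_ne_zero _ h1αne)]
  field_simp
  rw [pow_add, pow_add]
  ring
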